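/- Suppose η is squarefree (equivalently, η has only simple complex roots). If f ∈ ℝ[x] satisfies f·p ∈ U for every p ∈ U, then the derivative f′ is divisible by η in ℝ[x]. -/

import Mathlib

noncomputable section

/-- Physicists' Hermite polynomials indexed by naturals. -/
def hermN : ℕ → Polynomial ℝ
  | 0 => 1
  | 1 => Polynomial.C 2 * Polynomial.X
  | (n + 2) => Polynomial.C 2 * Polynomial.X * hermN (n + 1)
      - Polynomial.C (2 * ((n : ℝ) + 1)) * hermN n

/-- Physicists' Hermite polynomials indexed by integers, `0` for negative index. -/
def Herm (n : ℤ) : Polynomial ℝ := if 0 ≤ n then hermN n.toNat else 0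

/-- Hermite polynomial as a real function. -/
def H (n : ℤ) : ℝ → ℝ := fun x => (Herm n).eval x

/-- The Wronskian determinant of a finite family of functions. -/
def Wr {m : ℕ} (f : Fin m → ℝ → ℝ) (x : ℝ) : ℝ :=
  Matrix.det (Matrix.of fun i j : Fin m => iteratedDeriv (j : ℕ) (f i) x)

/-- `N = (Σ_{i=1}^l k_i) - l(l-1)/2`. -/
def Nval (k : ℕ → ℕ) (l : ℕ) : ℤ :=
  (∑ i ∈ Finset.range l, (k (i + 1) : ℤ)) - (l * (l - 1) / 2 : ℕ)

/-- The Wronskian of a finite family of polynomials. -/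
def WrP {m : ℕ} (f : Fin m → Polynomial ℝ) : Polynomial ℝ :=
  Matrix.det (Matrix.of fun i j : Fin m => (Polynomial.derivative)^[j.1] (f i))

/-- `η = Wr[H_{k 1}, …, H_{k l}]` as a polynomial. -/
def etaP (k : ℕ → ℕ) (l : ℕ) : Polynomial ℝ :=
  WrP (fun i : Fin l => Herm (k (i.1 + 1) : ℤ))

/-- The exceptional Hermite polynomial `ĥ(n) = Wr[H_{k 1},…,H_{k l}, H_{n+l-N}]`
as a polynomial. -/
def hhatP (k : ℕ → ℕ) (l : ℕ) (n : ℤ) : Polynomial ℝ :=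
  WrP (Fin.snoc (fun i : Fin l => Herm (k (i.1 + 1) : ℤ)) (Herm (n + l - Nval k l)))

/-- The degree set `I = {n : N - l ≤ n, n + l - N ∉ {k_1,…,k_l}}`. -/
def Iset (k : ℕ → ℕ) (l : ℕ) : Set ℤ :=
  {n | Nval k l - l ≤ n ∧ ∀ i, 1 ≤ i → i ≤ l → n + l - Nval k l ≠ (k i : ℤ)}

/-- `U`: the linear span of the exceptional Hermite polynomials. -/
def Uspan (k : ℕ → ℕ) (l : ℕ) : Submodule ℝ (Polynomial ℝ) :=
  Submodule.span ℝ ((fun n => hhatP k l n) '' Iset k l)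

namespace StabAux

open Polynomial Matrix

/-- Wronskian matrix over any commutative ring. -/
def WM {R : Type*} [CommRing R] {m : ℕ} (f : Fin m → Polynomial R) :
    Matrix (Fin m) (Fin m) (Polynomial R) :=
  Matrix.of fun i j => derivative^[(j : ℕ)] (f i)

lemma wrP_eq {m : ℕ} (f : Fin m → Polynomial ℝ) : WrP f = (WM f).det := rfl

lemma derivative_finset_prod {R : Type*} [CommRing R] {ι : Type*} [DecidableEq ι]
    (s : Finset ι) (f : ι → Polynomial R) :
    derivative (∏ i ∈ s, f i) = ∑ i ∈ s, (∏ j ∈ s.erase i, f j) * derivative (f i) := by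
  induction s using Finset.induction_on with
  | empty => simp
  | @insert a s ha ih =>
    rw [Finset.prod_insert ha, derivative_mul, ih, Finset.sum_insert ha,
      Finset.erase_insert ha, Finset.mul_sum]
    congr 1
    · ring
    · refine Finset.sum_congr rfl fun i hi => ?_
      rw [Finset.erase_insert_of_ne (by rintro rfl; exact ha hi)]
      rw [Finset.prod_insert (by simp [ha])]
      ring

lemma derivative_det {R : Type*} [CommRing R] {n : Type*} [Fintype n] [DecidableEq n]
    (M : Matrix n n (Polynomial R)) :
    derivative M.det = ∑ j, (M.updateCol j fun i => derivative (M i j)).det := by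
  rw [Matrix.det_apply]
  rw [map_sum]
  have key : ∀ σ : Equiv.Perm n,
      derivative (Equiv.Perm.sign σ • ∏ i, M (σ i) i)
        = ∑ j, Equiv.Perm.sign σ •
            ∏ i, (M.updateCol j fun i => derivative (M i j)) (σ i) i := by
    intro σ
    rw [Units.smul_def, map_zsmul, derivative_finset_prod]
    rw [← Finset.smul_sum]
    congr 1
    refine Finset.sum_congr rfl fun j _ => ?_
    rw [← Finset.mul_prod_erase _ _ (Finset.mem_univ j)]
    rw [Matrix.updateCol_self]
    rw [mul_comm]
    congr 1
    refine Finset.prod_congr rfl fun i hi => ?_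
    rw [Matrix.updateCol_ne (Finset.ne_of_mem_erase hi)]
  rw [Finset.sum_congr rfl fun σ _ => key σ, Finset.sum_comm]
  refine Finset.sum_congr rfl fun j _ => ?_
  rw [Matrix.det_apply]

/-- Derivative of a Wronskian determinant: bump the last column. -/
lemma derivative_det_WM {R : Type*} [CommRing R] {m : ℕ} (f : Fin (m + 1) → Polynomial R) :
    derivative (WM f).det =
      ((WM f).updateCol (Fin.last m) fun i => derivative^[m + 1] (f i)).det := by
  rw [derivative_det]
  rw [Finset.sum_eq_single (Fin.last m)]
  · refine congrArg det (congrArg _ (funext fun i => ?_))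
    exact (Function.iterate_succ_apply' derivative m (f i)).symm
  · intro j _ hj
    have hjm : (j : ℕ) < m := by
      have := j.isLt
      rcases Nat.lt_or_ge (j : ℕ) m with h | h
      · exact h
      · exact absurd (Fin.ext (by omega : (j : ℕ) = m)) hj
    set j2 : Fin (m + 1) := ⟨(j : ℕ) + 1, by omega⟩ with hj2
    apply Matrix.det_zero_of_column_eq (show j ≠ j2 by
      intro h; exact absurd (congrArg Fin.val h) (by simp [hj2]))
    intro i
    rw [Matrix.updateCol_self, Matrix.updateCol_ne (show j2 ≠ j by
      intro h; exact absurd (congrArg Fin.val h) (by simp [hj2]))]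
    show derivative (derivative^[(j : ℕ)] (f i)) = derivative^[(j2 : ℕ)] (f i)
    rw [← Function.iterate_succ_apply' derivative]
  · simp

/-- Cofactor expansion for a matrix with a standard-basis row. -/
lemma det_updateRow_single {R : Type*} [CommRing R] {m : ℕ}
    (M : Matrix (Fin (m + 1)) (Fin (m + 1)) R) (r c : Fin (m + 1)) :
    (M.updateRow r (Pi.single c 1)).det =
      (-1) ^ ((r : ℕ) + (c : ℕ)) * (M.submatrix r.succAbove c.succAbove).det := by
  rw [Matrix.det_succ_row _ r]
  rw [Finset.sum_eq_single c]
  · rw [Matrix.updateRow_self]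
    rw [Pi.single_eq_same, mul_one]
    have hsub : (M.updateRow r (Pi.single c 1)).submatrix r.succAbove c.succAbove
        = M.submatrix r.succAbove c.succAbove := Matrix.ext fun i j => by
      simp [Matrix.updateRow_ne (Fin.succAbove_ne r i)]
    rw [hsub]
  · intro j _ hj
    rw [Matrix.updateRow_self, Pi.single_eq_of_ne hj, mul_zero, zero_mul]
  · simp

lemma hermN_zero : hermN 0 = 1 := by simp [hermN]
lemma hermN_one : hermN 1 = Polynomial.C 2 * Polynomial.X := by simp [hermN]
lemma hermN_two (n : ℕ) : hermN (n + 2) = Polynomial.C 2 * Polynomial.X * hermN (n + 1)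
      - Polynomial.C (2 * ((n : ℝ) + 1)) * hermN n := by simp [hermN]

lemma hermN_deg_lead (n : ℕ) :
    (hermN n).natDegree = n ∧ (hermN n).leadingCoeff = 2 ^ n := by
  induction n using Nat.strong_induction_on with
  | _ n ih =>
    match n with
    | 0 => rw [hermN_zero]; constructor <;> simp
    | 1 =>
      rw [hermN_one]
      constructor
      · rw [natDegree_C_mul (show (2:ℝ) ≠ 0 by norm_num)]; simp
      · rw [leadingCoeff_mul]; simp
    | (n + 2) =>
      obtain ⟨h1d, h1l⟩ := ih (n + 1) (by omega)
      obtain ⟨h0d, h0l⟩ := ih n (by omega)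
      rw [hermN_two]
      have h1ne : hermN (n + 1) ≠ 0 := by
        intro h
        rw [h, leadingCoeff_zero] at h1l
        exact absurd h1l.symm (by positivity)
      have hCXne : (Polynomial.C (2:ℝ) * Polynomial.X) ≠ 0 := by
        intro h
        have h2 := congrArg (fun p => Polynomial.coeff p 1) h
        simp at h2
      have hA : (Polynomial.C 2 * Polynomial.X * hermN (n + 1)).natDegree = n + 2 := by
        rw [natDegree_mul hCXne h1ne, natDegree_C_mul (show (2:ℝ) ≠ 0 by norm_num),
          natDegree_X, h1d]
        omega
      have hAl : (Polynomial.C 2 * Polynomial.X * hermN (n + 1)).leadingCoeff = 2 ^ (n + 2) := by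
        rw [leadingCoeff_mul, leadingCoeff_mul, leadingCoeff_C, leadingCoeff_X, h1l]
        ring
      have hB : (Polynomial.C (2 * ((n : ℝ) + 1)) * hermN n).natDegree ≤ n :=
        le_trans (natDegree_C_mul_le _ _) (le_of_eq h0d)
      have hlt : (Polynomial.C (2 * ((n : ℝ) + 1)) * hermN n).natDegree
          < (Polynomial.C 2 * Polynomial.X * hermN (n + 1)).natDegree := by
        rw [hA]; omega
      constructor
      · rw [natDegree_sub_eq_left_of_natDegree_lt hlt, hA]
      · have hB0 : (Polynomial.C (2 * ((n : ℝ) + 1)) * hermN n).coeff (n + 2) = 0 :=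
          coeff_eq_zero_of_natDegree_lt (by omega)
        rw [← hAl]
        unfold Polynomial.leadingCoeff
        rw [natDegree_sub_eq_left_of_natDegree_lt hlt, hA, coeff_sub, hB0, sub_zero]

lemma hermN_ne_zero (n : ℕ) : hermN n ≠ 0 := by
  intro h
  have := (hermN_deg_lead n).2
  rw [h, leadingCoeff_zero] at this
  exact absurd this.symm (by positivity)

lemma mem_span_hermN_aux (d : ℕ) : ∀ q : Polynomial ℝ, q.natDegree ≤ d →
    q ∈ Submodule.span ℝ (Set.range hermN) := by
  induction d with
  | zero =>
    intro q hq
    have : q = q.coeff 0 • hermN 0 := by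
      rw [hermN_zero, Polynomial.eq_C_of_natDegree_le_zero hq]
      simp [Polynomial.smul_eq_C_mul]
    rw [this]
    exact Submodule.smul_mem _ _ (Submodule.subset_span ⟨0, rfl⟩)
  | succ d ihd =>
    intro q hq
    by_cases hd : q.natDegree ≤ d
    · exact ihd q hd
    have hdeg : q.natDegree = d + 1 := by omega
    set c : ℝ := q.leadingCoeff / 2 ^ (d + 1) with hc
    have hcoeff : (q - c • hermN (d + 1)).natDegree ≤ d := by
      rw [Polynomial.natDegree_le_iff_coeff_eq_zero]
      intro N hN
      rw [Polynomial.coeff_sub, Polynomial.coeff_smul]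
      rcases Nat.lt_or_ge (d + 1) N with h | h
      · rw [Polynomial.coeff_eq_zero_of_natDegree_lt (by omega),
          Polynomial.coeff_eq_zero_of_natDegree_lt (by rw [(hermN_deg_lead (d+1)).1]; omega)]
        simp
      · have hNd : N = d + 1 := by omega
        rw [hNd]
        have e1 : q.coeff (d + 1) = q.leadingCoeff := by rw [← hdeg]; rfl
        have e2 : (hermN (d + 1)).coeff (d + 1) = 2 ^ (d + 1) := by
          have h2 := (hermN_deg_lead (d + 1)).2
          unfold Polynomial.leadingCoeff at h2
          rw [(hermN_deg_lead (d + 1)).1] at h2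
          exact h2
        rw [e1, e2, hc, smul_eq_mul, div_mul_cancel₀]
        · simp
        · positivity
    have hqe : q = (q - c • hermN (d + 1)) + c • hermN (d + 1) := by ring
    rw [hqe]
    exact Submodule.add_mem _ (ihd _ hcoeff)
      (Submodule.smul_mem _ _ (Submodule.subset_span ⟨d + 1, rfl⟩))

lemma mem_span_hermN (q : Polynomial ℝ) : q ∈ Submodule.span ℝ (Set.range hermN) :=
  mem_span_hermN_aux q.natDegree q le_rfl

lemma exists_re_im (g : Polynomial ℂ) : ∃ q1 q2 : Polynomial ℝ,
    g = q1.map (algebraMap ℝ ℂ) + Polynomial.C Complex.I * q2.map (algebraMap ℝ ℂ) := by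
  induction g using Polynomial.induction_on' with
  | add p q hp hq =>
    obtain ⟨p1, p2, rfl⟩ := hp
    obtain ⟨q1, q2, rfl⟩ := hq
    exact ⟨p1 + q1, p2 + q2, by rw [Polynomial.map_add, Polynomial.map_add]; ring⟩
  | monomial n z =>
    refine ⟨Polynomial.monomial n z.re, Polynomial.monomial n z.im, ?_⟩
    rw [Polynomial.map_monomial, Polynomial.map_monomial, Polynomial.C_mul_monomial]
    rw [← map_add (Polynomial.monomial n)]
    congr 1
    simp [Complex.ext_iff]

section Bridge

variable {R : Type*} [CommRing R]

lemma WM_apply {m : ℕ} (F : Fin m → Polynomial R) (i j : Fin m) :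
    WM F i j = derivative^[(j : ℕ)] (F i) := rfl

lemma WM_snoc_castSucc {m : ℕ} (F : Fin m → Polynomial R) (g : Polynomial R)
    (i : Fin m) (j : Fin (m + 1)) :
    WM (Fin.snoc F g) (Fin.castSucc i) j = derivative^[(j : ℕ)] (F i) := by
  rw [WM_apply, Fin.snoc_castSucc]

lemma WM_snoc_last {m : ℕ} (F : Fin m → Polynomial R) (g : Polynomial R) (j : Fin (m + 1)) :
    WM (Fin.snoc F g) (Fin.last m) j = derivative^[(j : ℕ)] g := by
  rw [WM_apply, Fin.snoc_last]

lemma iterate_derivative_add' (k : ℕ) (p q : Polynomial R) :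
    derivative^[k] (p + q) = derivative^[k] p + derivative^[k] q := by
  induction k with
  | zero => simp
  | succ k ih => rw [Function.iterate_succ_apply', ih, derivative_add,
      Function.iterate_succ_apply', Function.iterate_succ_apply']

lemma WM_snoc_updateRow {m : ℕ} (F : Fin m → Polynomial R) (g : Polynomial R) :
    WM (Fin.snoc F g) = (WM (Fin.snoc F 0)).updateRow (Fin.last m)
      (fun j => derivative^[(j : ℕ)] g) := by
  refine Matrix.ext fun i j => ?_
  rcases eq_or_ne i (Fin.last m) with rfl | hi
  · rw [Matrix.updateRow_self, WM_snoc_last]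
  · rw [Matrix.updateRow_ne hi]
    obtain ⟨i', rfl⟩ := Fin.exists_castSucc_eq.mpr hi
    rw [WM_snoc_castSucc, WM_snoc_castSucc]

lemma det_WM_snoc_zero {m : ℕ} (F : Fin m → Polynomial R) :
    (WM (Fin.snoc F (0 : Polynomial R))).det = 0 := by
  apply Matrix.det_eq_zero_of_row_eq_zero (Fin.last m)
  intro j
  rw [WM_snoc_last]
  simp

lemma det_WM_snoc_add {m : ℕ} (F : Fin m → Polynomial R) (g h : Polynomial R) :
    (WM (Fin.snoc F (g + h))).det = (WM (Fin.snoc F g)).det + (WM (Fin.snoc F h)).det := by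
  rw [WM_snoc_updateRow F (g + h), WM_snoc_updateRow F g, WM_snoc_updateRow F h]
  rw [show (fun j : Fin (m+1) => derivative^[(j : ℕ)] (g + h)) =
    (fun j : Fin (m+1) => derivative^[(j : ℕ)] g) + (fun j : Fin (m+1) => derivative^[(j : ℕ)] h)
      from funext fun j => iterate_derivative_add' _ _ _]
  exact Matrix.det_updateRow_add _ _ _ _

lemma det_WM_snoc_C_mul {m : ℕ} (F : Fin m → Polynomial R) (z : R) (g : Polynomial R) :
    (WM (Fin.snoc F (Polynomial.C z * g))).det = Polynomial.C z * (WM (Fin.snoc F g)).det := by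
  rw [WM_snoc_updateRow F (Polynomial.C z * g), WM_snoc_updateRow F g]
  rw [show (fun j : Fin (m+1) => derivative^[(j : ℕ)] (Polynomial.C z * g)) =
    Polynomial.C z • (fun j : Fin (m+1) => derivative^[(j : ℕ)] g) from
      funext fun j => by
        simp only [Pi.smul_apply, smul_eq_mul]
        exact iterate_derivative_C_mul z g (j : ℕ)]
  rw [Matrix.det_updateRow_smul]

lemma map_det_WM {m : ℕ} (g : Fin m → Polynomial ℝ) :
    ((WM g).det).map (algebraMap ℝ ℂ) =
      (WM fun i => (g i).map (algebraMap ℝ ℂ)).det := by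
  have h := RingHom.map_det (Polynomial.mapRingHom (algebraMap ℝ ℂ)) (WM g)
  rw [show ((Polynomial.mapRingHom (algebraMap ℝ ℂ)) (WM g).det) =
    ((WM g).det).map (algebraMap ℝ ℂ) from rfl] at h
  rw [h]
  congr 1
  refine Matrix.ext fun i j => ?_
  show ((derivative^[(j : ℕ)] (g i)).map (algebraMap ℝ ℂ)) = derivative^[(j : ℕ)] ((g i).map _)
  rw [Polynomial.iterate_derivative_map]

end Bridge

section Problem

variable (k : ℕ → ℕ) (l : ℕ)

/-- the real rows -/
def Fr : Fin l → Polynomial ℝ := fun i => Herm (k (i.1 + 1) : ℤ)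

/-- the complexified rows -/
def Fc : Fin l → Polynomial ℂ := fun i => (Herm (k (i.1 + 1) : ℤ)).map (algebraMap ℝ ℂ)

lemma etaP_eq : etaP k l = (WM (Fr k l)).det := rfl

lemma map_Fr : (fun i => ((Fr k l) i).map (algebraMap ℝ ℂ)) = Fc k l := rfl

/-- every real Wronskian `Wr[F, q]` lies in `U` -/
lemma det_WM_mem_U (q : Polynomial ℝ) :
    (WM (Fin.snoc (Fr k l) q)).det ∈ Uspan k l := by
  have hspan := mem_span_hermN q
  induction hspan using Submodule.span_induction with
  | mem x hx =>
    obtain ⟨m, rfl⟩ := hx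
    by_cases hm : ∃ i, 1 ≤ i ∧ i ≤ l ∧ k i = m
    · obtain ⟨i, h1, h2, hk⟩ := hm
      have hiv : i - 1 < l := by omega
      have hne : (Fin.castSucc (⟨i - 1, hiv⟩ : Fin l)) ≠ Fin.last l := by
        intro hcon
        have h3 := congrArg Fin.val hcon
        simp [Fin.val_last] at h3
        omega
      have hrow : WM (Fin.snoc (Fr k l) (hermN m)) (Fin.castSucc (⟨i - 1, hiv⟩ : Fin l))
          = WM (Fin.snoc (Fr k l) (hermN m)) (Fin.last l) := by
        funext j
        rw [WM_snoc_castSucc, WM_snoc_last]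
        congr 1
        show Herm (k ((i - 1) + 1) : ℤ) = hermN m
        rw [show (i - 1) + 1 = i by omega, hk]
        simp [Herm]
      rw [Matrix.det_zero_of_row_eq hne hrow]
      exact Submodule.zero_mem _
    · push_neg at hm
      set n : ℤ := (m : ℤ) + Nval k l - l with hn
      have harg : n + l - Nval k l = (m : ℤ) := by rw [hn]; ring
      have hh : hhatP k l n = (WM (Fin.snoc (Fr k l) (hermN m))).det := by
        unfold hhatP
        rw [wrP_eq, harg]
        congr 1
      apply Submodule.subset_span
      refine ⟨n, ⟨?_, ?_⟩, hh⟩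
      · rw [hn]
        have h4 : (0 : ℤ) ≤ (m : ℤ) := Int.natCast_nonneg m
        linarith
      · intro i hi1 hi2
        rw [harg]
        intro hcon
        exact hm i hi1 hi2 (by exact_mod_cast hcon.symm)
  | zero => rw [det_WM_snoc_zero]; exact Submodule.zero_mem _
  | add x y _ _ hx hy => rw [det_WM_snoc_add]; exact Submodule.add_mem _ hx hy
  | smul r x _ hx =>
    rw [Polynomial.smul_eq_C_mul, det_WM_snoc_C_mul]
    rw [← Polynomial.smul_eq_C_mul]
    exact Submodule.smul_mem _ _ hx

/-- every element of `U` complexifies to a Wronskian `Wr[Fc, g]` -/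
lemma U_rep (p : Polynomial ℝ) (hp : p ∈ Uspan k l) :
    ∃ g : Polynomial ℂ, p.map (algebraMap ℝ ℂ) = (WM (Fin.snoc (Fc k l) g)).det := by
  induction hp using Submodule.span_induction with
  | mem x hx =>
    obtain ⟨n, _, rfl⟩ := hx
    refine ⟨(Herm (n + l - Nval k l)).map (algebraMap ℝ ℂ), ?_⟩
    show (hhatP k l n).map (algebraMap ℝ ℂ) = _
    unfold hhatP
    rw [wrP_eq, map_det_WM]
    congr 1
    rw [show (fun i => ((Fin.snoc (fun i : Fin l => Herm (k (i.1 + 1) : ℤ))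
        (Herm (n + l - Nval k l)) : Fin (l+1) → Polynomial ℝ) i).map (algebraMap ℝ ℂ))
      = (fun p : Polynomial ℝ => p.map (algebraMap ℝ ℂ)) ∘ (Fin.snoc
        (fun i : Fin l => Herm (k (i.1 + 1) : ℤ)) (Herm (n + l - Nval k l))) from rfl]
    rw [Fin.comp_snoc]
    rfl
  | zero => exact ⟨0, by rw [Polynomial.map_zero, det_WM_snoc_zero]⟩
  | add x y _ _ hx hy =>
    obtain ⟨g1, hg1⟩ := hx
    obtain ⟨g2, hg2⟩ := hy
    exact ⟨g1 + g2, by rw [Polynomial.map_add, hg1, hg2, det_WM_snoc_add]⟩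
  | smul r x _ hx =>
    obtain ⟨g, hg⟩ := hx
    refine ⟨Polynomial.C (algebraMap ℝ ℂ r) * g, ?_⟩
    rw [det_WM_snoc_C_mul, ← hg, Polynomial.smul_eq_C_mul, Polynomial.map_mul, Polynomial.map_C]

lemma map_det_snoc (q : Polynomial ℝ) :
    ((WM (Fin.snoc (Fr k l) q)).det).map (algebraMap ℝ ℂ)
      = (WM (Fin.snoc (Fc k l) (q.map (algebraMap ℝ ℂ)))).det := by
  rw [map_det_WM]
  congr 1
  rw [show (fun i => ((Fin.snoc (Fr k l) q : Fin (l + 1) → Polynomial ℝ) i).map (algebraMap ℝ ℂ))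
    = (fun p : Polynomial ℝ => p.map (algebraMap ℝ ℂ)) ∘ (Fin.snoc (Fr k l) q) from rfl]
  rw [Fin.comp_snoc]
  rfl

end Problem

section Key

open Polynomial

lemma eval_det_map {m : ℕ} (M : Matrix (Fin m) (Fin m) (Polynomial ℂ)) (x : ℂ) :
    Polynomial.eval x M.det = (M.map (Polynomial.eval x)).det := by
  have h := RingHom.map_det (Polynomial.evalRingHom x) M
  simpa using h

lemma key (k : ℕ → ℕ) (lp : ℕ) (hsq : Squarefree (etaP k (lp + 1))) (f : Polynomial ℝ)
    (hf : ∀ p ∈ Uspan k (lp + 1), f * p ∈ Uspan k (lp + 1))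
    (x0 : ℂ) (hx0 : Polynomial.eval x0 ((etaP k (lp + 1)).map (algebraMap ℝ ℂ)) = 0) :
    Polynomial.eval x0 ((Polynomial.derivative f).map (algebraMap ℝ ℂ)) = 0 := by
  classical
  have hetaC : (etaP k (lp + 1)).map (algebraMap ℝ ℂ) = (WM (Fc k (lp + 1))).det :=
    map_det_WM (Fr k (lp + 1))
  set A : Matrix (Fin (lp + 1)) (Fin (lp + 1)) ℂ :=
    (WM (Fc k (lp + 1))).map (Polynomial.eval x0) with hA
  have hdetA : A.det = 0 := by
    rw [hA, ← eval_det_map, ← hetaC, hx0]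
  have hsep : ((etaP k (lp + 1)).map (algebraMap ℝ ℂ)).Separable :=
    ((PerfectField.separable_iff_squarefree).mpr hsq).map
  have hd0 : Polynomial.eval x0
      (Polynomial.derivative ((etaP k (lp + 1)).map (algebraMap ℝ ℂ))) ≠ 0 := by
    obtain ⟨u, v, huv⟩ := hsep
    intro h0
    have h1 := congrArg (Polynomial.eval x0) huv
    simp only [Polynomial.eval_add, Polynomial.eval_mul, Polynomial.eval_one, hx0, h0,
      mul_zero, add_zero] at h1
    exact zero_ne_one h1
  have hetaC' : Polynomial.derivative ((etaP k (lp + 1)).map (algebraMap ℝ ℂ))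
      = ((WM (Fc k (lp + 1))).updateCol (Fin.last lp)
          (fun i => derivative^[lp + 1] (Fc k (lp + 1) i))).det := by
    rw [hetaC, derivative_det_WM]
  set A' : Matrix (Fin (lp + 1)) (Fin (lp + 1)) ℂ :=
    ((WM (Fc k (lp + 1))).updateCol (Fin.last lp)
      (fun i => derivative^[lp + 1] (Fc k (lp + 1) i))).map (Polynomial.eval x0) with hA'
  have hdetA' : A'.det ≠ 0 := by
    rw [hA', ← eval_det_map, ← hetaC']
    exact hd0
  obtain ⟨a, ha0, haA⟩ := Matrix.exists_vecMul_eq_zero_iff.mpr hdetA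
  obtain ⟨i0, hi0⟩ : ∃ i, a i ≠ 0 := Function.ne_iff.mp ha0
  set c : ℂ := ∑ i, a i * Polynomial.eval x0 (derivative^[lp + 1] (Fc k (lp + 1) i)) with hc
  set c' : ℂ := ∑ i, a i * Polynomial.eval x0 (derivative^[lp + 2] (Fc k (lp + 1) i)) with hc'
  have hvec : ∀ j, ∑ i, a i * A i j = 0 := by
    intro j
    have h1 := congrFun haA j
    simpa [Matrix.vecMul, dotProduct] using h1
  have hAentry : ∀ i j, A i j = Polynomial.eval x0 (derivative^[(j : ℕ)] (Fc k (lp + 1) i)) :=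
    fun i j => rfl
  have hcne : c ≠ 0 := by
    intro hc0
    refine hdetA' (Matrix.exists_vecMul_eq_zero_iff.mp ⟨a, ha0, ?_⟩)
    funext j
    show ∑ i, a i * A' i j = 0
    rcases eq_or_ne j (Fin.last lp) with rfl | hj
    · have h1 : ∀ i, A' i (Fin.last lp)
          = Polynomial.eval x0 (derivative^[lp + 1] (Fc k (lp + 1) i)) := by
        intro i
        rw [hA', Matrix.map_apply, Matrix.updateCol_self]
      rw [Finset.sum_congr rfl fun i _ => by rw [h1 i]]
      rw [← hc]
      exact hc0
    · have h1 : ∀ i, A' i j = A i j := by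
        intro i
        rw [hA', Matrix.map_apply, Matrix.updateCol_ne hj]
        rfl
      rw [Finset.sum_congr rfl fun i _ => by rw [h1 i]]
      exact hvec j
  -- the fundamental two-term identity
  have hstar : ∀ g : Polynomial ℂ,
      Polynomial.eval x0 ((WM (Fin.snoc (Fc k (lp + 1)) g)).det) * c'
        = Polynomial.eval x0 (Polynomial.derivative ((WM (Fin.snoc (Fc k (lp + 1)) g)).det)) * c := by
    intro g
    set B : Matrix (Fin (lp + 2)) (Fin (lp + 2)) ℂ :=
      (WM (Fin.snoc (Fc k (lp + 1)) g)).map (Polynomial.eval x0) with hB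
    set B' : Matrix (Fin (lp + 2)) (Fin (lp + 2)) ℂ :=
      ((WM (Fin.snoc (Fc k (lp + 1)) g)).updateCol (Fin.last (lp + 1))
        (fun i => derivative^[lp + 2]
          ((Fin.snoc (Fc k (lp + 1)) g : Fin (lp + 2) → Polynomial ℂ) i))).map
          (Polynomial.eval x0) with hB'
    have hBdet : Polynomial.eval x0 ((WM (Fin.snoc (Fc k (lp + 1)) g)).det) = B.det :=
      eval_det_map _ _
    have hB'det : Polynomial.eval x0
        (Polynomial.derivative ((WM (Fin.snoc (Fc k (lp + 1)) g)).det)) = B'.det := by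
      rw [derivative_det_WM]
      exact eval_det_map _ _
    have hgen : ∀ (Mx : Matrix (Fin (lp + 2)) (Fin (lp + 2)) ℂ) (w : ℂ),
        (∀ (i : Fin (lp + 1)) (j : Fin (lp + 1)),
          Mx (Fin.castSucc i) (Fin.castSucc j) = A i j) →
        ((∑ i : Fin (lp + 1), a i * Mx (Fin.castSucc i) (Fin.last (lp + 1))) = w) →
        a i0 * Mx.det
          = w * ((-1) ^ (((Fin.castSucc i0 : Fin (lp + 2)) : ℕ) + (lp + 1)) *
            (Mx.submatrix (Fin.castSucc i0).succAbove (Fin.last (lp + 1)).succAbove).det) := by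
      intro Mx w hcols hw
      have hsum : (∑ i2 : Fin (lp + 2), (Fin.snoc a 0 : Fin (lp + 2) → ℂ) i2 • Mx i2)
          = Pi.single (Fin.last (lp + 1)) w := by
        funext j
        rw [Finset.sum_apply, Fin.sum_univ_castSucc]
        simp only [Fin.snoc_castSucc, Fin.snoc_last, zero_smul, Pi.zero_apply, add_zero,
          Pi.smul_apply, smul_eq_mul, zero_mul]
        rcases eq_or_ne j (Fin.last (lp + 1)) with rfl | hj
        · rw [hw, Pi.single_eq_same]
        · obtain ⟨j', rfl⟩ := Fin.exists_castSucc_eq.mpr hj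
          rw [Pi.single_eq_of_ne hj]
          rw [Finset.sum_congr rfl fun i _ => by rw [hcols i j']]
          exact hvec j'
      have h1 : (Mx.updateRow (Fin.castSucc i0) (Pi.single (Fin.last (lp + 1)) w)).det
          = a i0 * Mx.det := by
        rw [← hsum, Matrix.det_updateRow_sum]
        simp [Fin.snoc_castSucc]
      have h2 : (Mx.updateRow (Fin.castSucc i0) (Pi.single (Fin.last (lp + 1)) w)).det
          = w * ((-1) ^ (((Fin.castSucc i0 : Fin (lp + 2)) : ℕ) + (lp + 1)) *
            (Mx.submatrix (Fin.castSucc i0).succAbove (Fin.last (lp + 1)).succAbove).det) := by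
        rw [show (Pi.single (Fin.last (lp + 1)) w : Fin (lp + 2) → ℂ)
            = w • (Pi.single (Fin.last (lp + 1)) 1 : Fin (lp + 2) → ℂ) from by
          funext j
          rcases eq_or_ne j (Fin.last (lp + 1)) with rfl | hj
          · simp
          · simp [Pi.single_eq_of_ne hj]]
        rw [Matrix.det_updateRow_smul, det_updateRow_single]
        rw [Fin.val_last]
      rw [← h1, h2]
    have hcolsB : ∀ (i : Fin (lp + 1)) (j : Fin (lp + 1)),
        B (Fin.castSucc i) (Fin.castSucc j) = A i j := by
      intro i j
      rw [hB, Matrix.map_apply, WM_snoc_castSucc, hAentry]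
      rw [Fin.coe_castSucc]
    have hwB : (∑ i : Fin (lp + 1), a i * B (Fin.castSucc i) (Fin.last (lp + 1))) = c := by
      rw [hc]
      refine Finset.sum_congr rfl fun i _ => ?_
      rw [hB, Matrix.map_apply, WM_snoc_castSucc, Fin.val_last]
    have hcolsB' : ∀ (i : Fin (lp + 1)) (j : Fin (lp + 1)),
        B' (Fin.castSucc i) (Fin.castSucc j) = A i j := by
      intro i j
      rw [hB', Matrix.map_apply, Matrix.updateCol_ne (Fin.castSucc_lt_last j).ne,
        WM_snoc_castSucc, hAentry, Fin.coe_castSucc]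
    have hwB' : (∑ i : Fin (lp + 1), a i * B' (Fin.castSucc i) (Fin.last (lp + 1))) = c' := by
      rw [hc']
      refine Finset.sum_congr rfl fun i _ => ?_
      rw [hB', Matrix.map_apply, Matrix.updateCol_self, Fin.snoc_castSucc]
    have hsubeq : B.submatrix (Fin.castSucc i0).succAbove (Fin.last (lp + 1)).succAbove
        = B'.submatrix (Fin.castSucc i0).succAbove (Fin.last (lp + 1)).succAbove := by
      refine Matrix.ext fun i j => ?_
      rw [Matrix.submatrix_apply, Matrix.submatrix_apply, Fin.succAbove_last]
      rw [hB, hB', Matrix.map_apply, Matrix.map_apply,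
        Matrix.updateCol_ne (Fin.castSucc_lt_last j).ne]
    have e1 := hgen B c hcolsB hwB
    have e2 := hgen B' c' hcolsB' hwB'
    rw [hsubeq] at e1
    rw [hBdet, hB'det]
    apply mul_left_cancel₀ hi0
    linear_combination c' * e1 - c * e2
  -- every element of U satisfies the two-term relation
  have hrel : ∀ p ∈ Uspan k (lp + 1),
      Polynomial.eval x0 (p.map (algebraMap ℝ ℂ)) * c'
        = Polynomial.eval x0 (Polynomial.derivative (p.map (algebraMap ℝ ℂ))) * c := by
    intro p hp
    obtain ⟨g, hg⟩ := U_rep k (lp + 1) p hp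
    rw [hg]
    exact hstar g
  -- existence of an element of U not vanishing at x0
  have hex : ∃ p ∈ Uspan k (lp + 1), Polynomial.eval x0 (p.map (algebraMap ℝ ℂ)) ≠ 0 := by
    set g0 : Polynomial ℂ := (Polynomial.X - Polynomial.C x0) ^ lp with hg0
    have hrow0 : ∀ j : Fin (lp + 2),
        Polynomial.eval x0 (derivative^[(j : ℕ)] g0)
          = (Pi.single (Fin.castSucc (Fin.last lp)) ((lp.factorial : ℂ)) : Fin (lp + 2) → ℂ)
              j := by
      intro j
      rw [hg0, Polynomial.iterate_derivative_X_sub_pow, nsmul_eq_mul, Pi.single_apply]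
      rcases eq_or_ne (j : ℕ) lp with hjl | hjl
      · rw [if_pos (Fin.ext (by simp [hjl]))]
        rw [hjl, Nat.sub_self, pow_zero, Nat.descFactorial_self]
        simp
      · rw [if_neg (fun hcon => hjl (by rw [hcon]; simp))]
        rcases Nat.lt_or_ge (j : ℕ) lp with h | h
        · simp [zero_pow (show lp - (j : ℕ) ≠ 0 by omega)]
        · have : lp < (j : ℕ) := by omega
          rw [Nat.descFactorial_eq_zero_iff_lt.mpr this]
          simp
    set B0 : Matrix (Fin (lp + 2)) (Fin (lp + 2)) ℂ :=
      (WM (Fin.snoc (Fc k (lp + 1)) g0)).map (Polynomial.eval x0) with hB0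
    have hB0row : B0 (Fin.last (lp + 1))
        = Pi.single (Fin.castSucc (Fin.last lp)) ((lp.factorial : ℂ)) := by
      funext j
      rw [hB0, Matrix.map_apply, WM_snoc_last]
      exact hrow0 j
    have hsubA' : B0.submatrix (Fin.last (lp + 1)).succAbove
        (Fin.castSucc (Fin.last lp)).succAbove = A' := by
      refine Matrix.ext fun i j => ?_
      rw [Matrix.submatrix_apply, Fin.succAbove_last]
      rcases eq_or_ne j (Fin.last lp) with rfl | hj
      · have hcol : (Fin.castSucc (Fin.last lp)).succAbove (Fin.last lp) = Fin.last (lp + 1) := by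
          rw [Fin.succAbove_of_le_castSucc _ _ le_rfl]
          exact Fin.succ_last lp
        rw [hcol, hB0, Matrix.map_apply, WM_snoc_castSucc, Fin.val_last]
        rw [hA', Matrix.map_apply, Matrix.updateCol_self]
      · have hlt : Fin.castSucc j < Fin.castSucc (Fin.last lp) := by
          rw [Fin.castSucc_lt_castSucc_iff]
          exact lt_of_le_of_ne (Fin.le_last j) hj
        rw [Fin.succAbove_of_castSucc_lt _ _ hlt]
        rw [hB0, Matrix.map_apply, WM_snoc_castSucc, Fin.coe_castSucc]
        rw [hA', Matrix.map_apply, Matrix.updateCol_ne hj]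
        rfl
    have hdetB0 : B0.det ≠ 0 := by
      have hupd : B0.updateRow (Fin.last (lp + 1))
          (Pi.single (Fin.castSucc (Fin.last lp)) ((lp.factorial : ℂ))) = B0 := by
        rw [← hB0row]
        exact Matrix.updateRow_eq_self _ _
      rw [← hupd]
      rw [show (Pi.single (Fin.castSucc (Fin.last lp)) ((lp.factorial : ℂ)) : Fin (lp + 2) → ℂ)
          = (lp.factorial : ℂ) • (Pi.single (Fin.castSucc (Fin.last lp)) 1 : Fin (lp + 2) → ℂ)
            from by
        funext j
        rcases eq_or_ne j (Fin.castSucc (Fin.last lp)) with rfl | hj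
        · simp
        · simp [Pi.single_eq_of_ne hj]]
      rw [Matrix.det_updateRow_smul, det_updateRow_single, hsubA']
      refine mul_ne_zero ?_ (mul_ne_zero (pow_ne_zero _ (by norm_num)) hdetA')
      simpa using Nat.factorial_ne_zero lp
    obtain ⟨q1, q2, hq⟩ := exists_re_im g0
    have hsplit : (WM (Fin.snoc (Fc k (lp + 1)) g0)).det
        = ((WM (Fin.snoc (Fr k (lp + 1)) q1)).det).map (algebraMap ℝ ℂ)
          + Polynomial.C Complex.I
            * ((WM (Fin.snoc (Fr k (lp + 1)) q2)).det).map (algebraMap ℝ ℂ) := by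
      rw [show (Fin.snoc (Fc k (lp + 1)) g0 : Fin (lp + 2) → Polynomial ℂ)
          = Fin.snoc (Fc k (lp + 1)) (q1.map (algebraMap ℝ ℂ)
            + Polynomial.C Complex.I * q2.map (algebraMap ℝ ℂ)) from by rw [← hq]]
      rw [det_WM_snoc_add, det_WM_snoc_C_mul]
      rw [map_det_snoc, map_det_snoc]
    have hB0val : B0.det
        = Polynomial.eval x0 (((WM (Fin.snoc (Fr k (lp + 1)) q1)).det).map (algebraMap ℝ ℂ))
          + Complex.I * Polynomial.eval x0
            (((WM (Fin.snoc (Fr k (lp + 1)) q2)).det).map (algebraMap ℝ ℂ)) := by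
      rw [hB0, ← eval_det_map, hsplit]
      simp
    by_cases h1 : Polynomial.eval x0
        (((WM (Fin.snoc (Fr k (lp + 1)) q1)).det).map (algebraMap ℝ ℂ)) = 0
    · refine ⟨(WM (Fin.snoc (Fr k (lp + 1)) q2)).det, det_WM_mem_U k (lp + 1) q2, ?_⟩
      intro h2
      apply hdetB0
      rw [hB0val, h1, h2]
      ring
    · exact ⟨(WM (Fin.snoc (Fr k (lp + 1)) q1)).det, det_WM_mem_U k (lp + 1) q1, h1⟩
  -- conclude
  obtain ⟨p, hpU, hα⟩ := hex
  have r1 := hrel p hpU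
  have r2 := hrel (f * p) (hf p hpU)
  rw [Polynomial.map_mul, Polynomial.derivative_mul] at r2
  simp only [Polynomial.eval_mul, Polynomial.eval_add] at r2
  have hgoal' : Polynomial.eval x0 (Polynomial.derivative (f.map (algebraMap ℝ ℂ))) = 0 := by
    have h3 : Polynomial.eval x0 (Polynomial.derivative (f.map (algebraMap ℝ ℂ)))
        * (Polynomial.eval x0 (p.map (algebraMap ℝ ℂ)) * c) = 0 := by
      linear_combination Polynomial.eval x0 (f.map (algebraMap ℝ ℂ)) * r1 - r2
    rcases mul_eq_zero.mp h3 with h | h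
    · exact h
    · exact absurd h (mul_ne_zero hα hcne)
  rw [← Polynomial.derivative_map]
  exact hgoal'

end Key

end StabAux

/-- If `η` is squarefree and `f` stabilizes `U`, then `η` divides `f'`. -/
theorem stmt_12 (l : ℕ) (hl : 1 ≤ l) (k : ℕ → ℕ) (hk1 : 1 ≤ k 1)
    (hmono : ∀ i, 1 ≤ i → i < l → k i < k (i + 1))
    (hsq : Squarefree (etaP k l))
    (f : Polynomial ℝ) (hf : ∀ p ∈ Uspan k l, f * p ∈ Uspan k l) :
    etaP k l ∣ Polynomial.derivative f := by
  classical
  rcases eq_or_ne (Polynomial.derivative f) 0 with h0 | h0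
  · rw [h0]; exact dvd_zero _
  obtain ⟨lp, rfl⟩ : ∃ lp, l = lp + 1 := ⟨l - 1, by omega⟩
  have hηne : etaP k (lp + 1) ≠ 0 := by
    intro h
    rw [h] at hsq
    exact not_squarefree_zero hsq
  set ηC : Polynomial ℂ := (etaP k (lp + 1)).map (algebraMap ℝ ℂ) with hηC
  set fC : Polynomial ℂ := (Polynomial.derivative f).map (algebraMap ℝ ℂ) with hfC
  have hηCne : ηC ≠ 0 := Polynomial.map_ne_zero hηne
  have hfCne : fC ≠ 0 := Polynomial.map_ne_zero h0
  have hsep : ηC.Separable := ((PerfectField.separable_iff_squarefree).mpr hsq).map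
  have hnodup := Polynomial.nodup_roots hsep
  have hroot : ∀ r ∈ ηC.roots, Polynomial.IsRoot fC r := by
    intro r hr
    have h1 : Polynomial.eval r ηC = 0 := (Polynomial.mem_roots'.mp hr).2
    exact StabAux.key k lp hsq f hf r h1
  have hle : ηC.roots ≤ fC.roots := by
    rw [Multiset.le_iff_count]
    intro r
    by_cases hr : r ∈ ηC.roots
    · have h1 : ηC.roots.count r ≤ 1 := Multiset.nodup_iff_count_le_one.mp hnodup r
      have h2 : 1 ≤ fC.roots.count r := Multiset.one_le_count_iff_mem.mpr
        (Polynomial.mem_roots'.mpr ⟨hfCne, hroot r hr⟩)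
      omega
    · rw [Multiset.count_eq_zero_of_notMem hr]
      exact Nat.zero_le _
  have hdvd1 : (ηC.roots.map (fun r => Polynomial.X - Polynomial.C r)).prod ∣ fC :=
    dvd_trans (Multiset.prod_dvd_prod_of_le (Multiset.map_le_map hle))
      (Polynomial.prod_multiset_X_sub_C_dvd fC)
  have hsplit := Polynomial.Splits.eq_prod_roots (IsAlgClosed.splits ηC)
  have hdvdC : ηC ∣ fC := by
    obtain ⟨w, hw⟩ := hdvd1
    have hlc : ηC.leadingCoeff ≠ 0 := Polynomial.leadingCoeff_ne_zero.mpr hηCne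
    set P : Polynomial ℂ := (ηC.roots.map (fun a => Polynomial.X - Polynomial.C a)).prod with hP
    set lc : ℂ := ηC.leadingCoeff with hlcdef
    refine ⟨Polynomial.C lc⁻¹ * w, ?_⟩
    rw [hsplit, hw]
    have hCC : Polynomial.C lc * Polynomial.C lc⁻¹ = 1 := by
      rw [← Polynomial.C_mul, mul_inv_cancel₀ hlc, Polynomial.C_1]
    linear_combination (-(P * w)) * hCC
  rw [← Polynomial.map_dvd_map' (algebraMap ℝ ℂ)]
  exact hdvdC

end
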